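/- Let H be a Hilbert space, U ⊆ H a nonempty closed convex set, a : H × H → ℝ a continuous symmetric coercive bilinear form, and ℓ : H → ℝ a continuous linear form. Then the variational inequality: find u ∈ U with a(u, v − u) ≥ ℓ(v − u) for all v ∈ U, has one and only one solution, and u is the unique minimizer over U of J(v) := (1/2)a(v,v) − ℓ(v). -/

import Mathlib

open Filter Topology

/-- Lions–Stampacchia: for a continuous symmetric coercive bilinear form `a`, a continuous
linear form `ℓ` and a nonempty closed convex set `U` in a Hilbert space, the variational
inequality `a(u, v − u) ≥ ℓ(v − u)` for all `v ∈ U` has a unique solution `u ∈ U`, and `u`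
is the unique minimizer over `U` of `J(v) = (1/2) a(v,v) − ℓ(v)`. -/
theorem stmt9 (H : Type*) [NormedAddCommGroup H] [InnerProductSpace ℝ H] [CompleteSpace H]
    (U : Set H) (hne : U.Nonempty) (hcl : IsClosed U) (hcv : Convex ℝ U)
    (a : H →L[ℝ] H →L[ℝ] ℝ) (hsym : ∀ u v, a u v = a v u)
    (c : ℝ) (hc : 0 < c) (hcoer : ∀ v, c * ‖v‖ ^ 2 ≤ a v v)
    (ℓ : H →L[ℝ] ℝ) :
    ∃! u, u ∈ U ∧ (∀ v ∈ U, ℓ (v - u) ≤ a u (v - u)) ∧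
      (∀ v ∈ U, (1 / 2) * a u u - ℓ u ≤ (1 / 2) * a v v - ℓ v) ∧
      (∀ v ∈ U, (1 / 2) * a v v - ℓ v = (1 / 2) * a u u - ℓ u → v = u) := by
  classical
  set J : H → ℝ := fun v => (1 / 2) * a v v - ℓ v with hJdef
  have hJeq : ∀ v, J v = (1 / 2) * a v v - ℓ v := fun v => by rw [hJdef]
  clear_value J
  have hJcont : Continuous J := by
    have h1 : Continuous fun v : H => a v v := a.continuous.clm_apply continuous_id
    rw [hJdef]
    exact (continuous_const.mul h1).sub ℓ.continuous
  -- key parallelogram identity (needs no symmetry)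
  have key : ∀ u v : H, J u / 2 + J v / 2 - J ((1/2 : ℝ) • (u + v))
      = (1/8) * a (u - v) (u - v) := by
    intro u v
    simp only [hJdef, map_add, map_sub, map_smul, ContinuousLinearMap.add_apply,
      ContinuousLinearMap.sub_apply, ContinuousLinearMap.smul_apply, smul_eq_mul]
    ring
  have key2 : ∀ u v : H, u ∈ U → v ∈ U → (1/2 : ℝ) • (u + v) ∈ U := by
    intro u v hu hv
    have := hcv hu hv (by norm_num : (0:ℝ) ≤ 1/2) (by norm_num : (0:ℝ) ≤ 1/2) (by norm_num)
    simpa [smul_add] using this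
  -- lower bound
  have hlb : ∀ v, -(‖ℓ‖^2 / (2*c)) ≤ J v := by
    intro v
    have h1 := hcoer v
    have h2 : ℓ v ≤ ‖ℓ‖ * ‖v‖ := le_trans (le_abs_self _)
      (by rw [← Real.norm_eq_abs]; exact ℓ.le_opNorm v)
    have h4 : ‖ℓ‖ * ‖v‖ - c/2 * ‖v‖^2 ≤ ‖ℓ‖^2 / (2*c) := by
      rw [le_div_iff₀ (by positivity)]
      nlinarith [sq_nonneg (c * ‖v‖ - ‖ℓ‖)]
    simp only [hJdef]
    nlinarith
  set m : ℝ := sInf (J '' U) with hm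
  clear_value m
  have hbdd : BddBelow (J '' U) := ⟨-(‖ℓ‖^2 / (2*c)), by rintro x ⟨v, hv, rfl⟩; exact hlb v⟩
  have hmle : ∀ v ∈ U, m ≤ J v := fun v hv => hm ▸ csInf_le hbdd ⟨v, hv, rfl⟩
  have hseq : ∀ n : ℕ, ∃ v ∈ U, J v < m + 1/((n:ℝ)+1) := by
    intro n
    obtain ⟨x, ⟨v, hv, rfl⟩, hx⟩ := Real.lt_sInf_add_pos (hne.image J)
      (by positivity : (0:ℝ) < 1/((n:ℝ)+1))
    rw [← hm] at hx
    exact ⟨v, hv, hx⟩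
  choose u huU huJ using hseq
  have hsq : ∀ N n k : ℕ, N ≤ n → N ≤ k → ‖u n - u k‖^2 ≤ 8 * (1/((N:ℝ)+1)) / c := by
    intro N n k hn hk
    have hmid := hmle _ (key2 (u n) (u k) (huU n) (huU k))
    have hk1 := key (u n) (u k)
    have hco := hcoer (u n - u k)
    have h1 : 1/((n:ℝ)+1) ≤ 1/((N:ℝ)+1) := by
      apply one_div_le_one_div_of_le (by positivity)
      have : (N:ℝ) ≤ n := by exact_mod_cast hn
      linarith
    have h2 : 1/((k:ℝ)+1) ≤ 1/((N:ℝ)+1) := by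
      apply one_div_le_one_div_of_le (by positivity)
      have : (N:ℝ) ≤ k := by exact_mod_cast hk
      linarith
    have hn' := huJ n
    have hk' := huJ k
    rw [le_div_iff₀ hc]
    nlinarith
  have hcau : CauchySeq u := by
    apply cauchySeq_of_le_tendsto_0 (fun N : ℕ => Real.sqrt (8 * (1/((N:ℝ)+1)) / c))
    · intro n k N hn hk
      rw [dist_eq_norm]
      have h := hsq N n k hn hk
      have := Real.sqrt_le_sqrt h
      rwa [Real.sqrt_sq (norm_nonneg _)] at this
    · have h0 : Tendsto (fun N : ℕ => 8 * (1/((N:ℝ)+1)) / c) atTop (𝓝 0) := by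
        have := (tendsto_one_div_add_atTop_nhds_zero_nat.const_mul (8:ℝ)).div_const c
        simpa using this
      have := (Real.continuous_sqrt.tendsto 0).comp h0
      simpa [Function.comp_def] using this
  obtain ⟨w, hwlim⟩ := cauchySeq_tendsto_of_complete hcau
  have hwU : w ∈ U := hcl.mem_of_tendsto hwlim (Eventually.of_forall huU)
  have hJw : J w = m := by
    have h1 : Tendsto (fun n => J (u n)) atTop (𝓝 (J w)) := (hJcont.tendsto w).comp hwlim
    have h2 : Tendsto (fun n => J (u n)) atTop (𝓝 m) := by
      apply tendsto_of_tendsto_of_tendsto_of_le_of_le (g := fun _ => m)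
        (h := fun n : ℕ => m + 1/((n:ℝ)+1)) tendsto_const_nhds ?_
        (fun n => hmle _ (huU n)) (fun n => (huJ n).le)
      have := Tendsto.const_add (f := fun n : ℕ => 1/((n:ℝ)+1)) m
        tendsto_one_div_add_atTop_nhds_zero_nat
      simpa using this
    exact tendsto_nhds_unique h1 h2
  have hmin : ∀ v ∈ U, J w ≤ J v := fun v hv => hJw ▸ hmle v hv
  have huniq : ∀ v ∈ U, J v = J w → v = w := by
    intro v hv hJv
    have hmid := hmle _ (key2 w v hwU hv)
    have hk := key w v
    have hco := hcoer (w - v)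
    have h8 : c * ‖w - v‖ ^ 2 ≤ c * 0 := by rw [mul_zero]; linarith
    have hsqle : ‖w - v‖^2 ≤ 0 := le_of_mul_le_mul_left h8 hc
    have h1 : w - v = 0 := by
      have h0 : ‖w - v‖ = 0 := by nlinarith [norm_nonneg (w - v), sq_nonneg ‖w - v‖]
      exact norm_eq_zero.mp h0
    exact (sub_eq_zero.mp h1).symm
  have hVI : ∀ v ∈ U, ℓ (v - w) ≤ a w (v - w) := by
    intro v hv
    set z := v - w with hz
    have hexp : ∀ t : ℝ, J (w + t • z) = J w + t * (a w z - ℓ z) + t^2/2 * a z z := by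
      intro t
      simp only [hJdef, map_add, map_smul, ContinuousLinearMap.add_apply,
        ContinuousLinearMap.smul_apply, smul_eq_mul]
      linear_combination (t/2) * hsym z w
    have step : ∀ t : ℝ, 0 < t → t ≤ 1 → 0 ≤ (a w z - ℓ z) + t/2 * a z z := by
      intro t ht ht1
      have hmem : w + t • z ∈ U := by
        have h := hcv hwU hv (by linarith : (0:ℝ) ≤ 1 - t) ht.le (by ring)
        have he : w + t • z = (1 - t) • w + t • v := by
          rw [hz, smul_sub, sub_smul, one_smul]; abel
        rwa [he]
      have h := hmin _ hmem
      rw [hexp t] at h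
      nlinarith
    have hall : ∀ n : ℕ, 0 ≤ (a w z - ℓ z) + (1/((n:ℝ)+1))/2 * a z z := by
      intro n
      apply step _ (by positivity)
      rw [div_le_one (by positivity)]
      have : (0:ℝ) ≤ n := Nat.cast_nonneg n
      linarith
    have hlim : Tendsto (fun n : ℕ => (a w z - ℓ z) + (1/((n:ℝ)+1))/2 * a z z)
        atTop (𝓝 (a w z - ℓ z)) := by
      have := ((tendsto_one_div_add_atTop_nhds_zero_nat.div_const 2).mul_const
        (a z z)).const_add (a w z - ℓ z)
      simpa using this
    have h0 : 0 ≤ a w z - ℓ z := ge_of_tendsto hlim (Eventually.of_forall hall)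
    linarith
  refine ⟨w, ⟨hwU, hVI, ?_, ?_⟩, ?_⟩
  · intro v hv
    have h := hmin v hv
    rwa [hJeq, hJeq] at h
  · intro v hv h
    exact huniq v hv (by rw [hJeq, hJeq]; exact h)
  · rintro y ⟨hyU, -, hymin, -⟩
    have h1 : J y ≤ J w := by rw [hJeq, hJeq]; exact hymin w hwU
    exact huniq y hyU (le_antisymm h1 (hmin y hyU))
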